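/- Fix λ ∈ ℂ and μ ≠ 0. Suppose W₋(θ) = α₋ cos(λθ) + β₋ sin(λθ) on (0, π/2) and W₊(θ) = α₊ cos(λθ) + β₊ sin(λθ) on (π/2, 2π) satisfy W₊(2π) = W₋(0), μW₊'(2π) = W₋'(0), W₊(π/2) = W₋(π/2), μW₊'(π/2) = W₋'(π/2). Then the coefficient vector (α₋, β₋, α₊, β₊) lies in a nontrivial kernel iff (μ²+1) sin(λπ/2) sin(3λπ/2) + 2μ(1 - cos(λπ/2) cos(3λπ/2)) = 0. -/

import Mathlib

private theorem det_fin_four' {R : Type*} [CommRing R] (M : Matrix (Fin 4) (Fin 4) R) :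
    M.det =
      M 0 0 * M 1 1 * M 2 2 * M 3 3 - M 0 0 * M 1 1 * M 2 3 * M 3 2 -
        M 0 0 * M 1 2 * M 2 1 * M 3 3 + M 0 0 * M 1 2 * M 2 3 * M 3 1 +
        M 0 0 * M 1 3 * M 2 1 * M 3 2 - M 0 0 * M 1 3 * M 2 2 * M 3 1 -
        M 0 1 * M 1 0 * M 2 2 * M 3 3 + M 0 1 * M 1 0 * M 2 3 * M 3 2 +
        M 0 1 * M 1 2 * M 2 0 * M 3 3 - M 0 1 * M 1 2 * M 2 3 * M 3 0 -
        M 0 1 * M 1 3 * M 2 0 * M 3 2 + M 0 1 * M 1 3 * M 2 2 * M 3 0 +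
        M 0 2 * M 1 0 * M 2 1 * M 3 3 - M 0 2 * M 1 0 * M 2 3 * M 3 1 -
        M 0 2 * M 1 1 * M 2 0 * M 3 3 + M 0 2 * M 1 1 * M 2 3 * M 3 0 +
        M 0 2 * M 1 3 * M 2 0 * M 3 1 - M 0 2 * M 1 3 * M 2 1 * M 3 0 -
        M 0 3 * M 1 0 * M 2 1 * M 3 2 + M 0 3 * M 1 0 * M 2 2 * M 3 1 +
        M 0 3 * M 1 1 * M 2 0 * M 3 2 - M 0 3 * M 1 1 * M 2 2 * M 3 0 -
        M 0 3 * M 1 2 * M 2 0 * M 3 1 + M 0 3 * M 1 2 * M 2 1 * M 3 0 := by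
  simp [Matrix.det_succ_row_zero, Fin.sum_univ_succ, Fin.succAbove,
    show Fin.succ (2 : Fin 3) = 3 by decide, show Fin.castSucc (2 : Fin 3) = 2 by decide]
  ring

/-- Angular homogeneous solutions `W₋(θ) = α₋ cos λθ + β₋ sin λθ` on `(0, π/2)` and
`W₊(θ) = α₊ cos λθ + β₊ sin λθ` on `(π/2, 2π)` satisfying the transmission conditions
`W₊(2π) = W₋(0)`, `μW₊'(2π) = W₋'(0)`, `W₊(π/2) = W₋(π/2)`, `μW₊'(π/2) = W₋'(π/2)`
have a nontrivial coefficient vector `(α₋, β₋, α₊, β₊)` iff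
`(μ²+1) sin(λπ/2) sin(3λπ/2) + 2μ(1 - cos(λπ/2) cos(3λπ/2)) = 0`. -/
theorem angular_kernel_iff_determinant (lam μ : ℂ) (hμ : μ ≠ 0) :
    (∃ aM bM aP bP : ℂ, ¬(aM = 0 ∧ bM = 0 ∧ aP = 0 ∧ bP = 0) ∧
      -- W₊(2π) = W₋(0)
      aP * Complex.cos (lam * (2 * Real.pi)) + bP * Complex.sin (lam * (2 * Real.pi)) =
        aM * Complex.cos (lam * 0) + bM * Complex.sin (lam * 0) ∧
      -- μ W₊'(2π) = W₋'(0)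
      μ * (lam * (-aP * Complex.sin (lam * (2 * Real.pi)) +
            bP * Complex.cos (lam * (2 * Real.pi)))) =
        lam * (-aM * Complex.sin (lam * 0) + bM * Complex.cos (lam * 0)) ∧
      -- W₊(π/2) = W₋(π/2)
      aP * Complex.cos (lam * (Real.pi / 2)) + bP * Complex.sin (lam * (Real.pi / 2)) =
        aM * Complex.cos (lam * (Real.pi / 2)) + bM * Complex.sin (lam * (Real.pi / 2)) ∧
      -- μ W₊'(π/2) = W₋'(π/2)
      μ * (lam * (-aP * Complex.sin (lam * (Real.pi / 2)) +
            bP * Complex.cos (lam * (Real.pi / 2)))) =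
        lam * (-aM * Complex.sin (lam * (Real.pi / 2)) +
          bM * Complex.cos (lam * (Real.pi / 2)))) ↔
    (μ ^ 2 + 1) * Complex.sin (lam * Real.pi / 2) * Complex.sin (3 * lam * Real.pi / 2) +
        2 * μ * (1 - Complex.cos (lam * Real.pi / 2) * Complex.cos (3 * lam * Real.pi / 2))
      = 0 := by
  by_cases hlam : lam = 0
  · subst hlam
    constructor
    · intro _
      simp
    · intro _
      exact ⟨0, 1, 0, 1, by norm_num, by simp, by simp, by simp, by simp⟩
  · set A : ℂ := lam * (Real.pi : ℂ) / 2 with hA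
    set B : ℂ := 3 * lam * (Real.pi : ℂ) / 2 with hB
    have hab : lam * (2 * (Real.pi : ℂ)) = A + B := by rw [hA, hB]; ring
    have ha : lam * ((Real.pi : ℂ) / 2) = A := by rw [hA]; ring
    have key : ∀ X Y : ℂ, μ * (lam * X) = lam * Y ↔ μ * X = Y := by
      intro X Y
      rw [show μ * (lam * X) = lam * (μ * X) by ring]
      exact mul_right_inj' hlam
    simp only [hab, ha, mul_zero, Complex.cos_zero, Complex.sin_zero, mul_one,
      neg_mul, zero_add, add_zero, key]
    set M : Matrix (Fin 4) (Fin 4) ℂ :=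
      !![-1, 0, Complex.cos (A + B), Complex.sin (A + B);
         0, -1, -(μ * Complex.sin (A + B)), μ * Complex.cos (A + B);
         -Complex.cos A, -Complex.sin A, Complex.cos A, Complex.sin A;
         Complex.sin A, -Complex.cos A, -(μ * Complex.sin A), μ * Complex.cos A] with hM
    have hdet : M.det =
        (μ ^ 2 + 1) * Complex.sin A * Complex.sin B +
          2 * μ * (1 - Complex.cos A * Complex.cos B) := by
      have h1 := Complex.sin_sq_add_cos_sq A
      have h3 := Complex.sin_sq_add_cos_sq B
      rw [hM, det_fin_four']
      simp [Matrix.cons_val_two, Matrix.cons_val_three, Complex.cos_add, Complex.sin_add]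
      linear_combination
        (μ * Complex.sin A ^ 2 * Complex.sin B ^ 2 +
          μ * Complex.sin A ^ 2 * Complex.cos B ^ 2 +
          (μ ^ 2 + 1) * Complex.sin A * Complex.sin B + μ -
          2 * μ * Complex.cos A * Complex.cos B +
          μ * Complex.cos A ^ 2 * Complex.sin B ^ 2 +
          μ * Complex.cos A ^ 2 * Complex.cos B ^ 2 +
          μ * Complex.sin B ^ 2 + μ * Complex.cos B ^ 2) * h1 + μ * h3
    rw [← hdet, ← Matrix.exists_mulVec_eq_zero_iff]
    constructor
    · rintro ⟨aM, bM, aP, bP, hnz, h1, h2, h3, h4⟩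
      refine ⟨![aM, bM, aP, bP], ?_, ?_⟩
      · intro h
        exact hnz ⟨by simpa using congrFun h 0, by simpa using congrFun h 1,
          by simpa using congrFun h 2, by simpa using congrFun h 3⟩
      · funext i
        fin_cases i <;>
          simp [hM, Matrix.mulVec, dotProduct, Fin.sum_univ_four]
        · linear_combination h1
        · linear_combination h2
        · linear_combination h3
        · linear_combination h4
    · rintro ⟨v, hv, hMv⟩
      have e0 := congrFun hMv 0
      have e1 := congrFun hMv 1
      have e2 := congrFun hMv 2
      have e3 := congrFun hMv 3
      simp [hM, Matrix.mulVec, dotProduct, Fin.sum_univ_four] at e0 e1 e2 e3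
      refine ⟨v 0, v 1, v 2, v 3, ?_, ?_, ?_, ?_, ?_⟩
      · rintro ⟨g0, g1, g2, g3⟩
        apply hv
        funext i
        fin_cases i
        · exact g0
        · exact g1
        · exact g2
        · exact g3
      · linear_combination e0
      · linear_combination e1
      · linear_combination e2
      · linear_combination e3
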